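/- Let M be a mixed abelian category, heart of a bounded t-structure on a triangulated category D satisfying the mixedness condition Hom^i_D(L,L') = 0 for simple L,L' with wt(L') > wt(L) - i. If X is an object of M with weights <= n and Y is an object of M with weights >= n+1-i, then Hom_D(X, Y[i]) = 0. -/

import Mathlib

/-!
STATEMENT 4: Let M be a mixed abelian category which is the heart of a bounded
t-structure on a triangulated category D (expressed via a fully faithful additive
functor ι : M ⥤ D sending short exact sequences to distinguished triangles),
satisfying Hom^i_D(L,L') = 0 for simple L, L' with wt L' > wt L - i.  If X has
weights ≤ n and Y has weights ≥ n+1-i then Hom_D(ι X, (ι Y)[i]) = 0.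
-/

open CategoryTheory Limits Pretriangulated

universe v u v' u'

/-- `S` is a subquotient of `X` (for `S` simple, this says `S` is a composition factor). -/
def IsSubquotient {C : Type u} [Category.{v} C] (S X : C) : Prop :=
  ∃ (Y : C) (i : Y ⟶ X) (p : Y ⟶ S), Mono i ∧ Epi p

section Aux

variable {M : Type u} [Category.{v} M] [Abelian M]

lemma simple_unop' (Q : Mᵒᵖ) (hQ : Simple Q) : Simple Q.unop := by
  apply simple_of_cosimple
  intro Z f hf
  haveI := hQ
  haveI : Mono f.op := inferInstance
  rw [← isIso_op_iff, Simple.mono_isIso_iff_nonzero f.op]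
  constructor
  · intro h h0
    exact h (by rw [h0]; rfl)
  · intro h h0
    exact h (by simpa using congrArg Quiver.Hom.unop h0)

lemma exists_simple_quotient' (X : M) (hN : IsNoetherianObject X) (h : ¬ IsZero X) :
    ∃ (S : M) (e : X ⟶ S), Simple S ∧ Epi e := by
  haveI : IsArtinianObject (Opposite.op X) := by
    rw [IsArtinianObject, ObjectProperty.is_iff, isArtinianObject]
    constructor
    have wf : WellFounded ((· > ·) : Subobject X → Subobject X → Prop) := by
      haveI := hN; exact wellFounded_gt
    let F := Abelian.subobjectIsoSubobjectOp X
    refine Subrelation.wf (r := InvImage (· > ·)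
      (fun Q : Subobject (Opposite.op X) => F.symm (OrderDual.toDual Q))) ?_ (InvImage.wf _ wf)
    intro Q₁ Q₂ h12
    exact F.symm.lt_iff_lt.mpr (OrderDual.toDual_lt_toDual.mpr h12)
  obtain ⟨Q, hQ⟩ := exists_simple_subobject (X := Opposite.op X) (fun hz => h hz.unop)
  exact ⟨(Q : Mᵒᵖ).unop, Q.arrow.unop, simple_unop' _ hQ, inferInstance⟩

/-- If `Z ≤ mk (kernel.ι e ≫ Z.arrow)` then `e = 0`, contradicting simplicity of target. -/
lemma kernel_subobject_lt {X : M} (Z : Subobject X) {S : M} (e : (Z : M) ⟶ S)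
    (hS : Simple S) (he : Epi e) :
    Subobject.mk (kernel.ι e ≫ Z.arrow) < Z := by
  haveI : Mono (kernel.ι e ≫ Z.arrow) := mono_comp _ _
  refine lt_of_le_of_ne (Subobject.mk_le_of_comm (kernel.ι e) rfl) ?_
  intro hEq
  have hle : Z ≤ Subobject.mk (kernel.ι e ≫ Z.arrow) := le_of_eq hEq.symm
  set u := Subobject.ofLE Z _ hle
  have harr : u ≫ (Subobject.mk (kernel.ι e ≫ Z.arrow)).arrow = Z.arrow :=
    Subobject.ofLE_arrow hle
  have harr2 : (Subobject.mk (kernel.ι e ≫ Z.arrow)).arrow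
      = (Subobject.underlyingIso _).hom ≫ (kernel.ι e ≫ Z.arrow) :=
    (Subobject.underlyingIso_hom_comp_eq_mk _).symm
  have hid : (u ≫ (Subobject.underlyingIso (kernel.ι e ≫ Z.arrow)).hom ≫ kernel.ι e) ≫ Z.arrow
      = 𝟙 _ ≫ Z.arrow := by
    rw [Category.id_comp]
    rw [harr2] at harr
    simpa using harr
  have hsplit : (u ≫ (Subobject.underlyingIso (kernel.ι e ≫ Z.arrow)).hom) ≫ kernel.ι e = 𝟙 _ := by
    have := (cancel_mono Z.arrow).1 hid
    simpa using this
  haveI : IsSplitEpi (kernel.ι e) :=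
    ⟨⟨⟨u ≫ (Subobject.underlyingIso (kernel.ι e ≫ Z.arrow)).hom, hsplit⟩⟩⟩
  haveI : IsIso (kernel.ι e) := isIso_of_mono_of_epi _
  have he0 : e = 0 := by
    have := kernel.condition e
    rwa [← cancel_epi (kernel.ι e), comp_zero]
  haveI := he
  apply id_nonzero S
  rw [← cancel_epi e, comp_zero, Category.comp_id, he0]

end Aux

theorem stmt4 {M : Type u} [Category.{v} M] [Abelian M]
    {D : Type u'} [Category.{v'} D] [HasZeroObject D] [HasShift D ℤ] [Preadditive D]
    [∀ n : ℤ, (shiftFunctor D n).Additive] [Pretriangulated D]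
    -- finite length of the heart
    (_finLen : ∀ X : M, IsNoetherianObject X ∧ IsArtinianObject X)
    -- M is the heart of a bounded t-structure on D: the inclusion is fully faithful
    -- and sends short exact sequences to distinguished triangles
    (ι : M ⥤ D) [ι.Full] [ι.Faithful] [ι.Additive]
    (_hheart : ∀ (S : ShortComplex M), S.ShortExact →
      ∃ δ : ι.obj S.X₃ ⟶ (ι.obj S.X₁)⟦(1 : ℤ)⟧,
        Triangle.mk (ι.map S.f) (ι.map S.g) δ ∈ distTriang D)
    (wt : M → ℤ)
    (_hwt : ∀ (L L' : M), Simple L → Simple L' → Nonempty (L ≅ L') → wt L = wt L')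
    -- mixedness of D: Hom^i(L,L') = 0 for simples with wt L' > wt L - i
    (_hmixed : ∀ (L L' : M), Simple L → Simple L' → ∀ i : ℤ, wt L - i < wt L' →
      ∀ φ : ι.obj L ⟶ (ι.obj L')⟦i⟧, φ = 0)
    (n : ℤ) (i : ℤ) (X Y : M)
    -- X has weights ≤ n, Y has weights ≥ n + 1 - i
    (_hX : ∀ S : M, Simple S → IsSubquotient S X → wt S ≤ n)
    (_hY : ∀ S : M, Simple S → IsSubquotient S Y → n + 1 - i ≤ wt S)
    (φ : ι.obj X ⟶ (ι.obj Y)⟦i⟧) :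
    φ = 0 := by
  -- Step B : the case where the target is simple
  have hB : ∀ (L : M), Simple L → n + 1 - i ≤ wt L →
      ∀ (X' : M), (∀ S : M, Simple S → IsSubquotient S X' → wt S ≤ n) →
      ∀ ψ : ι.obj X' ⟶ (ι.obj L)⟦i⟧, ψ = 0 := by
    intro L hL hwL X' hX'
    haveI : IsArtinianObject X' := (_finLen X').2
    have main : ∀ Z : Subobject X', ∀ ψ : ι.obj (Z : M) ⟶ (ι.obj L)⟦i⟧, ψ = 0 := by
      intro Z
      refine (wellFounded_lt (α := Subobject X')).induction
        (C := fun Z => ∀ ψ : ι.obj (Z : M) ⟶ (ι.obj L)⟦i⟧, ψ = 0) Z ?_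
      intro Z IH ψ
      by_cases hz : IsZero ((Z : M))
      · exact (ι.map_isZero hz).eq_of_src ψ 0
      · obtain ⟨S, e, hS, he⟩ := exists_simple_quotient' (Z : M) (_finLen _).1 hz
        haveI := he
        set C0 : ShortComplex M := ShortComplex.mk (kernel.ι e) e (kernel.condition e) with hC0
        have hse : C0.ShortExact :=
          { exact := C0.exact_of_f_is_kernel (kernelIsKernel e)
            mono_f := by dsimp [C0]; infer_instance
            epi_g := by dsimp [C0]; infer_instance }
        obtain ⟨δ, hT⟩ := _hheart C0 hse
        haveI : Mono (kernel.ι e ≫ Z.arrow) := mono_comp _ _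
        have hWZ := kernel_subobject_lt Z e hS he
        -- restriction of ψ to the kernel vanishes
        have h1 : ι.map (kernel.ι e) ≫ ψ = 0 := by
          have h2 := IH _ hWZ
            (ι.map ((Subobject.underlyingIso (kernel.ι e ≫ Z.arrow)).hom) ≫
              ι.map (kernel.ι e) ≫ ψ)
          rwa [← cancel_epi (ι.map ((Subobject.underlyingIso (kernel.ι e ≫ Z.arrow)).hom)),
            comp_zero]
        obtain ⟨g, hg⟩ := Triangle.yoneda_exact₂ _ hT ψ h1
        have hwS : wt S ≤ n := hX' S hS ⟨(Z : M), Z.arrow, e, inferInstance, he⟩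
        have hg0 : g = 0 := _hmixed S L hS hL i (by omega) g
        rw [hg, hg0, comp_zero]; rfl
    intro ψ
    haveI : IsIso ((⊤ : Subobject X').arrow) := Subobject.isIso_top_arrow
    have h0 := main ⊤ (ι.map ((⊤ : Subobject X').arrow) ≫ ψ)
    rwa [← cancel_epi (ι.map ((⊤ : Subobject X').arrow)), comp_zero]
  -- Step A : induction on the target
  haveI : IsArtinianObject Y := (_finLen Y).2
  have hA : ∀ Z : Subobject Y, ∀ ψ : ι.obj X ⟶ (ι.obj (Z : M))⟦i⟧, ψ = 0 := by
    intro Z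
    refine (wellFounded_lt (α := Subobject Y)).induction
      (C := fun Z => ∀ ψ : ι.obj X ⟶ (ι.obj (Z : M))⟦i⟧, ψ = 0) Z ?_
    intro Z IH ψ
    by_cases hz : IsZero ((Z : M))
    · exact ((shiftFunctor D i).map_isZero (ι.map_isZero hz)).eq_of_tgt ψ 0
    · obtain ⟨S, e, hS, he⟩ := exists_simple_quotient' (Z : M) (_finLen _).1 hz
      haveI := he
      set C0 : ShortComplex M := ShortComplex.mk (kernel.ι e) e (kernel.condition e) with hC0
      have hse : C0.ShortExact :=
        { exact := C0.exact_of_f_is_kernel (kernelIsKernel e)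
          mono_f := by dsimp [C0]; infer_instance
          epi_g := by dsimp [C0]; infer_instance }
      obtain ⟨δ, hT⟩ := _hheart C0 hse
      have hT' := Triangle.shift_distinguished _ hT i
      haveI : Mono (kernel.ι e ≫ Z.arrow) := mono_comp _ _
      have hWZ := kernel_subobject_lt Z e hS he
      -- ψ composed with the (shifted) projection to ι S vanishes by step B
      have hψS : ψ ≫ (ι.map e)⟦i⟧' = 0 := by
        have hwS : n + 1 - i ≤ wt S := _hY S hS ⟨(Z : M), Z.arrow, e, inferInstance, he⟩
        exact hB S hS hwS X _hX (ψ ≫ (ι.map e)⟦i⟧')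
      have hψ2 : ψ ≫ ((CategoryTheory.shiftFunctor (Triangle D) i).obj
          (Triangle.mk (ι.map C0.f) (ι.map C0.g) δ)).mor₂ = 0 := by
        dsimp [Triangle.shiftFunctor]
        simp only [Triangle.mk_mor₂, Units.smul_def, Preadditive.comp_zsmul]
        exact (Preadditive.comp_zsmul _ _ _).trans
          ((congrArg (fun x => ((i.negOnePow : ℤˣ) : ℤ) • x) hψS).trans (by exact zsmul_zero _))
      obtain ⟨g, hg⟩ := Triangle.coyoneda_exact₂ _ hT' ψ hψ2
      have hg0 : g = 0 := by
        have h2 := IH _ hWZ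
          (g ≫ (ι.map ((Subobject.underlyingIso (kernel.ι e ≫ Z.arrow)).inv))⟦i⟧')
        haveI : IsIso ((ι.map ((Subobject.underlyingIso (kernel.ι e ≫ Z.arrow)).inv))⟦i⟧') := by
          infer_instance
        exact (cancel_mono ((ι.map ((Subobject.underlyingIso (kernel.ι e ≫ Z.arrow)).inv))⟦i⟧')).1
          (h2.trans zero_comp.symm)
      rw [hg, hg0, zero_comp]; rfl
  haveI : IsIso ((⊤ : Subobject Y).arrow) := Subobject.isIso_top_arrow
  set v := ((ι.map ((⊤ : Subobject Y).arrow))⟦i⟧') with hv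
  haveI : IsIso v := by dsimp [v]; infer_instance
  have h0 := hA ⊤ (φ ≫ CategoryTheory.inv v)
  have hφ : φ = (φ ≫ CategoryTheory.inv v) ≫ v := by simp
  rw [hφ, h0, zero_comp]
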